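/- For every finite connected simple graph G = (V, E), every vertex v_i and every integer l ≥ 1, the receptive-field edge sets satisfy E_i^{(l+1)} = ⋃_{v_j ∈ N_i ∪ {v_i}} E_j^{(l)}. -/

import Mathlib

open scoped Classical

/-- The receptive-field graph `(V, E_i^{(l)})` of node `i` after `l` message-passing
layers: `E_i^{(l)} = {(p,q) ∈ E : d(i,p) ≤ l, d(i,q) ≤ l, d(i,p) + d(i,q) < 2l}`. -/
def recepGraph {V : Type*} (G : SimpleGraph V) (i : V) (l : ℕ) : SimpleGraph V where
  Adj p q := G.Adj p q ∧ G.dist i p ≤ l ∧ G.dist i q ≤ l ∧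
    G.dist i p + G.dist i q < 2 * l
  symm := ⟨fun p q h => ⟨h.1.symm, h.2.2.1, h.2.1, by have := h.2.2.2; omega⟩⟩
  loopless := ⟨fun p h => G.loopless.irrefl p h.1⟩

/-- From a vertex at distance `k+1`, there is a neighbor at distance `≤ k`. -/
lemma exists_adj_dist_le {V : Type*} (G : SimpleGraph V) (hconn : G.Connected)
    {i p : V} {k : ℕ} (h : G.dist i p = k + 1) :
    ∃ j, G.Adj i j ∧ G.dist j p ≤ k := by
  obtain ⟨w, hw⟩ := hconn.exists_walk_length_eq_dist i p
  rw [h] at hw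
  cases w with
  | nil => simp at hw
  | cons hadj w' =>
    refine ⟨_, hadj, ?_⟩
    have := SimpleGraph.dist_le w'
    simp [SimpleGraph.Walk.length_cons] at hw
    omega

/-- the receptive fields satisfy
`E_i^{(l+1)} = ⋃_{j ∈ N_i ∪ {i}} E_j^{(l)}`. -/
theorem receptive_field_union (n : ℕ) (G : SimpleGraph (Fin n)) (hconn : G.Connected)
    (i : Fin n) (l : ℕ) (hl : 1 ≤ l) :
    ∀ p q, (recepGraph G i (l + 1)).Adj p q ↔
      ∃ j, (j = i ∨ G.Adj i j) ∧ (recepGraph G j l).Adj p q := by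
  intro p q
  constructor
  · rintro ⟨hpq, hp, hq, hsum⟩
    -- wlog-style: handle general case via a helper
    have key : ∀ p q : Fin n, G.Adj p q → G.dist i p ≤ l + 1 → G.dist i q ≤ l + 1 →
        G.dist i p + G.dist i q < 2 * (l + 1) → G.dist i p ≤ G.dist i q →
        ∃ j, (j = i ∨ G.Adj i j) ∧ (recepGraph G j l).Adj p q := by
      intro p q hpq hp hq hsum hle
      have hp' : G.dist i p ≤ l := by omega
      have hdistpq : G.dist p q = 1 := (SimpleGraph.dist_eq_one_iff_adj).2 hpq
      rcases Nat.eq_zero_or_pos (G.dist i p) with h0 | hpos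
      · -- i = p
        have hip : i = p := by
          have := (SimpleGraph.Connected.dist_eq_zero_iff hconn).1 h0
          exact this
        refine ⟨i, Or.inl rfl, hpq, by omega, ?_, ?_⟩
        · have : G.dist i q = 1 := by rw [hip]; exact hdistpq
          omega
        · have : G.dist i q = 1 := by rw [hip]; exact hdistpq
          omega
      · obtain ⟨k, hk⟩ : ∃ k, G.dist i p = k + 1 := ⟨G.dist i p - 1, by omega⟩
        obtain ⟨j, hij, hjp⟩ := exists_adj_dist_le G hconn hk
        have hjq : G.dist j q ≤ G.dist j p + 1 := by
          have := hconn.dist_triangle (u := j) (v := p) (w := q)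
          omega
        exact ⟨j, Or.inr hij, hpq, by omega, by omega, by omega⟩
    rcases le_total (G.dist i p) (G.dist i q) with h | h
    · exact key p q hpq hp hq hsum h
    · obtain ⟨j, hj, hadj⟩ := key q p hpq.symm hq hp (by omega) h
      exact ⟨j, hj, hadj.symm⟩
  · rintro ⟨j, hj, hpq, hp, hq, hsum⟩
    have hij : G.dist i j ≤ 1 := by
      rcases hj with rfl | hadj
      · rw [SimpleGraph.dist_self]; omega
      · exact le_of_eq ((SimpleGraph.dist_eq_one_iff_adj).2 hadj)
    have h1 := hconn.dist_triangle (u := i) (v := j) (w := p)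
    have h2 := hconn.dist_triangle (u := i) (v := j) (w := q)
    exact ⟨hpq, by omega, by omega, by omega⟩
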